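/- In the MISER code with n = 2k, d = n-1, α = k, built from an α×α matrix Ψ all of whose submatrices are full rank and a scalar ε with ε ≠ 0 and ε² ≠ 1: a failed systematic node ℓ can be exactly repaired from d = n-1 symbols, one from each remaining node. Formally, the B×α matrix Γ whose columns are the ℓ-th columns of the parity-node generator matrices G^{(k+1)},...,G^{(k+α)}, together with the unit vectors supported on position ℓ of each block i ≠ ℓ, linearly span the ℓ-th block identity: there is an α×α matrix M and a (k-1)×α matrix N such that Γ·M plus the correction from systematic nodes equals the matrix with I_α in block ℓ and zeros elsewhere. -/
import Mathlib


/-- Exact repair of a systematic node in the MISER code (`n = 2k`, `d = n - 1`,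
`α = k`): the `ℓ`-th columns of the parity-node generator matrices, together with
the unit vectors passed by the other systematic nodes, span the block-`ℓ` identity. -/
theorem miser_systematic_repair
    {F : Type*} [Field F] [Fintype F] {k : ℕ}
    (Ψ : Matrix (Fin k) (Fin k) F)
    (hΨ : ∀ (r : ℕ) (rows cols : Fin r → Fin k), Function.Injective rows →
      Function.Injective cols → IsUnit (Ψ.submatrix rows cols))
    (ε : F) (hε : ε ≠ 0) (hε2 : ε ^ 2 ≠ 1)
    (ℓ : Fin k) :
    ∃ (M : Matrix (Fin k) (Fin k) F) (N : {i : Fin k // i ≠ ℓ} → Fin k → F),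
      ∀ (r : Fin k × Fin k) (j : Fin k),
        ((Matrix.of (fun (r' : Fin k × Fin k) (m : Fin k) =>
            if r'.1 = ℓ then ε * Ψ r'.2 m
            else if r'.2 = ℓ then Ψ r'.1 m else 0) :
          Matrix (Fin k × Fin k) (Fin k) F) * M) r j
          + ∑ i : {i : Fin k // i ≠ ℓ},
              N i j * (if r.1 = i.val ∧ r.2 = ℓ then (1 : F) else 0)
        = if r.1 = ℓ ∧ r.2 = j then 1 else 0 := by
  have hU : IsUnit Ψ := by
    simpa using hΨ k id id Function.injective_id Function.injective_id
  have hdet : IsUnit Ψ.det := (Matrix.isUnit_iff_isUnit_det Ψ).mp hU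
  have hΨinv : Ψ * Ψ⁻¹ = 1 := Matrix.mul_nonsing_inv Ψ hdet
  refine ⟨ε⁻¹ • Ψ⁻¹, fun i j => -ε⁻¹ * (if (i : Fin k) = j then 1 else 0), ?_⟩
  rintro ⟨a, b⟩ j
  have key : ∀ x y : Fin k, ∑ m, Ψ x m * Ψ⁻¹ m y = if x = y then 1 else 0 := by
    intro x y
    have := congrArg (fun A => A x y) hΨinv
    simpa [Matrix.mul_apply, Matrix.one_apply] using this
  simp only [Matrix.mul_apply, Matrix.of_apply, Matrix.smul_apply, smul_eq_mul]
  by_cases ha : a = ℓ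
  · subst ha
    have hsum0 : ∑ i : {i : Fin k // i ≠ a},
        (-ε⁻¹ * (if (i : Fin k) = j then 1 else 0)) *
          (if a = (i : Fin k) ∧ b = a then (1 : F) else 0) = 0 := by
      apply Finset.sum_eq_zero
      rintro ⟨i, hi⟩ -
      simp [Ne.symm hi]
    rw [hsum0, add_zero]
    have : ∑ m, ε * Ψ b m * (ε⁻¹ * Ψ⁻¹ m j)
        = ε * ε⁻¹ * ∑ m, Ψ b m * Ψ⁻¹ m j := by
      rw [Finset.mul_sum]; congr 1; ext m; ring
    simp only [if_pos rfl, if_true, true_and]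
    rw [this, key, mul_inv_cancel₀ hε, one_mul]
  · by_cases hb : b = ℓ
    · subst hb
      simp only [if_neg ha]
      have hsum : ∑ i : {i : Fin k // i ≠ b},
          (-ε⁻¹ * (if (i : Fin k) = j then 1 else 0)) *
            (if a = (i : Fin k) then (1 : F) else 0)
          = -ε⁻¹ * (if a = j then 1 else 0) := by
        rw [Fintype.sum_eq_single (⟨a, ha⟩ : {i : Fin k // i ≠ b})]
        · simp
        · rintro ⟨i, hi⟩ hne
          have : a ≠ i := fun h => hne (by simp [h])
          simp [this]
      simp only [if_pos rfl, if_true, and_true]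
      rw [hsum]
      have h2 : ∑ m, Ψ a m * (ε⁻¹ * Ψ⁻¹ m j)
          = ε⁻¹ * (if a = j then 1 else 0) := by
        rw [← key a j, Finset.mul_sum]; congr 1; ext m; ring
      rw [h2]
      by_cases haj : a = j
      · have hjb : j ≠ b := haj ▸ ha
        simp [haj, hjb]
      · simp [ha, haj]
    · simp [ha, hb]
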